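/- Let t, W ∈ ℂ with t ≠ 1, t ≠ -1, and W² = (1+t)(5-3t). Set z = (1-t)²(1+t), v₁ = 1/(1-t), v₂ = (1+t+W)/(2(t²-1)), and v₃ = (1+t-W)/(2(t²-1)). Then each of v₁, v₂, v₃ satisfies the cubic equation z·Y³ - 2Y + 1 = 0. -/

import Mathlib

theorem roots_of_depressed_cubic
    (t W z v₁ v₂ v₃ : ℂ) (ht1 : t ≠ 1) (ht2 : t ≠ -1)
    (hW : W ^ 2 = (1 + t) * (5 - 3 * t))
    (hz : z = (1 - t) ^ 2 * (1 + t))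
    (hv1 : v₁ = 1 / (1 - t))
    (hv2 : v₂ = (1 + t + W) / (2 * (t ^ 2 - 1)))
    (hv3 : v₃ = (1 + t - W) / (2 * (t ^ 2 - 1))) :
    z * v₁ ^ 3 - 2 * v₁ + 1 = 0 ∧
    z * v₂ ^ 3 - 2 * v₂ + 1 = 0 ∧
    z * v₃ ^ 3 - 2 * v₃ + 1 = 0 := by
  have h1 : (1 : ℂ) - t ≠ 0 := sub_ne_zero.mpr (Ne.symm ht1)
  have h3 : t ^ 2 - 1 ≠ 0 := by
    intro h
    rcases mul_eq_zero.mp (show (t - 1) * (t + 1) = 0 by linear_combination h) with h' | h'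
    · exact ht1 (by linear_combination h')
    · exact ht2 (by linear_combination h')
  refine ⟨?_, ?_, ?_⟩
  · subst hz hv1; field_simp; ring
  · subst hz hv2; field_simp
    linear_combination (3 + 1*W^1 - 1*t^1*W^1 - 6*t^2 - 1*t^2*W^1 + 1*t^3*W^1 + 3*t^4) * hW
  · subst hz hv3; field_simp
    linear_combination (3 - 1*W^1 + 1*t^1*W^1 - 6*t^2 + 1*t^2*W^1 - 1*t^3*W^1 + 3*t^4) * hW
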